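/- Suppose 𝒜 = {0, 1, …, ε} ∪ {p₁, …, p_l} ∪ {α − 1, α}, where ε ≥ 1 and ε + 2 ≤ p₁ < ⋯ < p_l ≤ α − ε, and assume moreover that {α − ε, …, α} ⊆ 𝒜 and that p₁ − ε − 1 = λ(𝒜). Then reg(𝒜) = r(𝒜) = ⌊(λ(𝒜) − 1)/ε⌋ + 2, where r(𝒜) := min{r ∈ ℕ : (r+1)𝒜 = {0, α} + r𝒜} and reg(𝒜) := min{m ≥ 1 : m𝒜 is full}. -/

import Mathlib

open scoped Pointwise

/-- The `m`-fold sumset of a finite set `A ⊆ ℕ`, with `0 • A = {0}`. -/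
def sumset (A : Finset ℕ) : ℕ → Finset ℕ
  | 0 => {0}
  | m + 1 => sumset A m + A

/-- A subset of `ℕ` is full iff it equals `{0, 1, …, n}` for some `n`. -/
def IsFull (B : Finset ℕ) : Prop := ∃ n : ℕ, B = Finset.Iic n

/-- `{i, …, j}` is a gap of `B`: disjoint from `B`, with `i - 1 ∈ B` and `j + 1 ∈ B`. -/
def IsGap (B : Finset ℕ) (i j : ℕ) : Prop :=
  1 ≤ i ∧ i ≤ j ∧ (∀ k, i ≤ k → k ≤ j → k ∉ B) ∧ i - 1 ∈ B ∧ j + 1 ∈ B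

/-- `λ(B)`: the maximal length of a gap of `B` (`0` if there are no gaps). -/
noncomputable def gapLen (B : Finset ℕ) : ℕ :=
  sSup {n | ∃ i j, IsGap B i j ∧ n = j - i + 1}

/-- Property `(P₁)`. -/
def P1 (A : Finset ℕ) (α : ℕ) : Prop :=
  ∀ m : ℕ, ¬ IsFull (sumset A m) → ¬ IsFull (sumset A m + ({0, α} : Finset ℕ))

/-- Property `(P₂)`. -/
def P2 (A : Finset ℕ) (α : ℕ) : Prop :=
  ∀ m : ℕ, ¬ IsFull (sumset A m) →
    ¬ ((∀ k, k ≤ α → k ∈ sumset A m) ∧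
       (∀ k, (m - 1) * α ≤ k → k ≤ m * α → k ∈ sumset A m))

/-- The combinatorial reduction number `r(𝒜)`. -/
noncomputable def rA (A : Finset ℕ) (α : ℕ) : ℕ :=
  sInf {r : ℕ | sumset A (r + 1) = ({0, α} : Finset ℕ) + sumset A r}

/-- The combinatorial regularity `reg(𝒜)`. -/
noncomputable def regA (A : Finset ℕ) : ℕ :=
  sInf {m : ℕ | 1 ≤ m ∧ IsFull (sumset A m)}

lemma sumset_succ (A : Finset ℕ) (m : ℕ) : sumset A (m+1) = sumset A m + A := rfl

lemma mem_sumset_zero {A : Finset ℕ} {x : ℕ} : x ∈ sumset A 0 ↔ x = 0 := Finset.mem_singleton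

lemma add_mem_sumset {A : Finset ℕ} {m : ℕ} {x : ℕ} (hx : x ∈ sumset A m) :
    ∀ {k y}, y ∈ sumset A k → x + y ∈ sumset A (m + k) := by
  intro k
  induction k with
  | zero =>
    intro y hy; rw [mem_sumset_zero] at hy; subst hy; simpa using hx
  | succ k ih =>
    intro y hy
    rw [sumset_succ, Finset.mem_add] at hy
    obtain ⟨z, hz, a, ha, rfl⟩ := hy
    have h := Finset.add_mem_add (ih hz) ha
    rw [← sumset_succ] at h
    rw [← add_assoc x z a]
    exact h

lemma zero_mem_sumset {A : Finset ℕ} (h0 : 0 ∈ A) : ∀ k, 0 ∈ sumset A k := by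
  intro k
  induction k with
  | zero => simp [mem_sumset_zero]
  | succ k ih => rw [sumset_succ]; simpa using Finset.add_mem_add ih h0

lemma mem_sumset_one {A : Finset ℕ} {a : ℕ} (ha : a ∈ A) : a ∈ sumset A 1 := by
  rw [sumset_succ]
  simpa using (Finset.add_mem_add (Finset.mem_singleton_self 0) ha : 0 + a ∈ sumset A 0 + A)

lemma sumset_subset {A : Finset ℕ} (h0 : 0 ∈ A) {m m' : ℕ} (h : m ≤ m') :
    sumset A m ⊆ sumset A m' := by
  intro x hx
  obtain ⟨k, rfl⟩ := Nat.exists_eq_add_of_le h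
  simpa using add_mem_sumset hx (zero_mem_sumset h0 k)

lemma mul_mem_sumset {A : Finset ℕ} {α : ℕ} (hα : α ∈ A) : ∀ j, j * α ∈ sumset A j := by
  intro j
  induction j with
  | zero => simp [mem_sumset_zero]
  | succ j ih =>
    have := add_mem_sumset ih (mem_sumset_one hα)
    rw [Nat.succ_mul]
    exact this

lemma sumset_le {A : Finset ℕ} {α : ℕ} (hmax : ∀ a ∈ A, a ≤ α) :
    ∀ {m x}, x ∈ sumset A m → x ≤ m * α := by
  intro m
  induction m with
  | zero => intro x hx; rw [mem_sumset_zero] at hx; omega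
  | succ m ih =>
    intro x hx
    rw [sumset_succ, Finset.mem_add] at hx
    obtain ⟨y, hy, a, ha, rfl⟩ := hx
    have h1 := ih hy
    have h2 := hmax a ha
    have h3 : (m+1) * α = m * α + α := by ring
    omega

lemma sumset_pair {α : ℕ} : ∀ {k x}, x ∈ sumset ({0, α} : Finset ℕ) k → ∃ j ≤ k, x = j * α := by
  intro k
  induction k with
  | zero => intro x hx; rw [mem_sumset_zero] at hx; exact ⟨0, by omega, by omega⟩
  | succ k ih =>
    intro x hx
    rw [sumset_succ, Finset.mem_add] at hx
    obtain ⟨y, hy, b, hb, rfl⟩ := hx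
    obtain ⟨j, hj, rfl⟩ := ih hy
    simp only [Finset.mem_insert, Finset.mem_singleton] at hb
    rcases hb with rfl | rfl
    · exact ⟨j, by omega, by omega⟩
    · exact ⟨j + 1, by omega, by ring⟩

lemma fill_low {A : Finset ℕ} {ε : ℕ} (hsub : ∀ t ≤ ε, t ∈ A) :
    ∀ k t, t ≤ k * ε → t ∈ sumset A k := by
  intro k
  induction k with
  | zero => intro t ht; rw [mem_sumset_zero]; omega
  | succ k ih =>
    intro t ht
    rcases le_or_gt t ε with h | h
    · have := add_mem_sumset (zero_mem_sumset (hsub 0 (by omega)) k) (mem_sumset_one (hsub t h))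
      simpa using this
    · have h1 : t - ε ≤ k * ε := by
        have : (k+1) * ε = k * ε + ε := by ring
        omega
      have := add_mem_sumset (ih (t - ε) h1) (mem_sumset_one (hsub ε le_rfl))
      have he : t - ε + ε = t := by omega
      rw [he] at this
      exact this

lemma fill_high {A : Finset ℕ} {ε α : ℕ} (htail : ∀ e ≤ ε, α - e ∈ A) (hεα : ε ≤ α) :
    ∀ k s, s ≤ k * ε → k * α - s ∈ sumset A k := by
  intro k
  induction k with
  | zero => intro s hs; rw [mem_sumset_zero]; omega
  | succ k ih =>
    intro s hs
    have hmul : (k+1) * α = k * α + α := by ring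
    have hmul2 : (k+1) * ε = k * ε + ε := by ring
    have hka : k * ε ≤ k * α := Nat.mul_le_mul_left k hεα
    rcases le_or_gt s ε with h | h
    · have h0 : (0:ℕ) ≤ k * ε := by omega
      have hk : k * α ∈ sumset A k := by
        have := ih 0 h0; simpa using this
      have := add_mem_sumset hk (mem_sumset_one (htail s h))
      have he : k * α + (α - s) = (k+1) * α - s := by omega
      rw [he] at this; exact this
    · have h1 : s - ε ≤ k * ε := by omega
      have := add_mem_sumset (ih (s - ε) h1) (mem_sumset_one (htail ε le_rfl))
      have he : k * α - (s - ε) + (α - ε) = (k+1) * α - s := by omega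
      rw [he] at this; exact this

lemma bound_low {A : Finset ℕ} {ε p : ℕ} (hsmall : ∀ a ∈ A, a < p → a ≤ ε) :
    ∀ m x, x ∈ sumset A m → x < p → x ≤ m * ε := by
  intro m
  induction m with
  | zero => intro x hx _; rw [mem_sumset_zero] at hx; omega
  | succ m ih =>
    intro x hx hp
    rw [sumset_succ, Finset.mem_add] at hx
    obtain ⟨y, hy, a, ha, rfl⟩ := hx
    have h1 := ih y hy (by omega)
    have h2 := hsmall a ha (by omega)
    have : (m+1) * ε = m * ε + ε := by ring
    omega


/-- If `𝒜 = {0,…,ε} ∪ {p₁,…,p_l} ∪ {α−1, α}` with `ε ≥ 1`,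
`ε + 2 ≤ p₁ < ⋯ < p_l ≤ α − ε`, `{α−ε,…,α} ⊆ 𝒜` and `p₁ − ε − 1 = λ(𝒜)`, then
`reg(𝒜) = r(𝒜) = ⌊(λ(𝒜) − 1)/ε⌋ + 2`. -/
theorem stmt_19 (𝒜 P : Finset ℕ) (ε α : ℕ) (hPne : P.Nonempty) (hε : 1 ≤ ε)
    (h𝒜 : 𝒜 = Finset.Iic ε ∪ P ∪ {α - 1, α})
    (hP : ∀ q ∈ P, ε + 2 ≤ q ∧ q ≤ α - ε)
    (htail : ∀ k, α - ε ≤ k → k ≤ α → k ∈ 𝒜)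
    (hlam : P.min' hPne - ε - 1 = gapLen 𝒜) :
    regA 𝒜 = rA 𝒜 α ∧ rA 𝒜 α = (gapLen 𝒜 - 1) / ε + 2 := by
  set p := P.min' hPne with hpdef
  have hpP : p ∈ P := P.min'_mem hPne
  obtain ⟨hp2, hpα⟩ := hP p hpP
  have hα2 : 2 * ε + 2 ≤ α := by omega
  set lam := gapLen 𝒜 with hlamdef
  have hlam1 : 1 ≤ lam := by omega
  have hplam : p = ε + 1 + lam := by omega
  obtain ⟨R, hRdef⟩ : ∃ R, R = (lam - 1) / ε + 2 := ⟨_, rfl⟩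
  have hR2 : 2 ≤ R := by rw [hRdef]; exact Nat.le_add_left 2 _
  -- basic membership facts about 𝒜
  have hIic : ∀ t ≤ ε, t ∈ 𝒜 := by
    intro t ht
    rw [h𝒜]
    simp only [Finset.mem_union, Finset.mem_Iic]
    left; left; exact ht
  have h0A : 0 ∈ 𝒜 := hIic 0 (by omega)
  have hαA : α ∈ 𝒜 := by
    rw [h𝒜]; simp
  have htail' : ∀ e ≤ ε, α - e ∈ 𝒜 := fun e he => htail _ (by omega) (by omega)
  have hεα : ε ≤ α := by omega
  have hmax : ∀ a ∈ 𝒜, a ≤ α := by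
    intro a ha
    rw [h𝒜] at ha
    simp only [Finset.mem_union, Finset.mem_Iic, Finset.mem_insert, Finset.mem_singleton] at ha
    rcases ha with (h | h) | (h | h)
    · omega
    · have := (hP a h).2; omega
    · omega
    · omega
  have hsmall : ∀ a ∈ 𝒜, a < p → a ≤ ε := by
    intro a ha hap
    rw [h𝒜] at ha
    simp only [Finset.mem_union, Finset.mem_Iic, Finset.mem_insert, Finset.mem_singleton] at ha
    rcases ha with (h | h) | (h | h)
    · exact h
    · have := P.min'_le a h; omega
    · omega
    · omega
  have hpA : p ∈ 𝒜 := by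
    rw [h𝒜]
    simp only [Finset.mem_union]
    left; right; exact hpP
  -- gaps are bounded by lam
  have hgapbdd : BddAbove {n | ∃ i j, IsGap 𝒜 i j ∧ n = j - i + 1} := by
    refine ⟨α, ?_⟩
    rintro n ⟨i, j, hg, rfl⟩
    have h1 := hg.1
    have h2 := hmax _ hg.2.2.2.2
    omega
  have hgap_le : ∀ i j, IsGap 𝒜 i j → j - i + 1 ≤ lam := by
    intro i j hg
    exact le_csSup hgapbdd ⟨i, j, hg, rfl⟩
  -- neighbors of a non-member
  have hnbr : ∀ v, 0 < v → v < α → v ∉ 𝒜 →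
      ∃ a' a, a' ∈ 𝒜 ∧ a ∈ 𝒜 ∧ a' < v ∧ v < a ∧ a ≤ α ∧ a - a' - 1 ≤ lam := by
    intro v hv0 hvα hvA
    set S1 := 𝒜.filter (· ≤ v) with hS1
    have hS1ne : S1.Nonempty := ⟨0, by simp [hS1, h0A]⟩
    set a' := S1.max' hS1ne with ha'
    have ha'S1 : a' ∈ S1 := S1.max'_mem hS1ne
    have ha'A : a' ∈ 𝒜 := (Finset.mem_filter.mp ha'S1).1
    have ha'v : a' ≤ v := by simpa using (Finset.mem_filter.mp ha'S1).2
    have ha'lt : a' < v := lt_of_le_of_ne ha'v (fun h => hvA (h ▸ ha'A))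
    set S2 := 𝒜.filter (v ≤ ·) with hS2
    have hS2ne : S2.Nonempty := ⟨α, by simp [hS2, hαA]; omega⟩
    set a := S2.min' hS2ne with ha
    have haS2 : a ∈ S2 := S2.min'_mem hS2ne
    have haA : a ∈ 𝒜 := (Finset.mem_filter.mp haS2).1
    have hva : v ≤ a := by simpa using (Finset.mem_filter.mp haS2).2
    have hvlt : v < a := lt_of_le_of_ne hva (fun h => hvA (h.symm ▸ haA))
    have hnone : ∀ k, a' + 1 ≤ k → k ≤ a - 1 → k ∉ 𝒜 := by
      intro k h1 h2 hk
      rcases le_or_gt k v with h | h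
      · have : k ∈ S1 := Finset.mem_filter.mpr ⟨hk, by simpa using h⟩
        have := S1.le_max' k this
        omega
      · have : k ∈ S2 := Finset.mem_filter.mpr ⟨hk, by simpa using h.le⟩
        have := S2.min'_le k this
        omega
    have hgap : IsGap 𝒜 (a' + 1) (a - 1) := by
      refine ⟨by omega, by omega, hnone, ?_, ?_⟩
      · simpa using ha'A
      · have : a - 1 + 1 = a := by omega
        rw [this]; exact haA
    have := hgap_le _ _ hgap
    exact ⟨a', a, ha'A, haA, ha'lt, hvlt, hmax a haA, by omega⟩
  -- ceiling helper
  have hceil : ∀ ρ : ℕ, 1 ≤ ρ → ρ ≤ ((ρ - 1) / ε + 1) * ε := by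
    intro ρ hρ
    have h1 := Nat.div_add_mod (ρ - 1) ε
    have h2 : (ρ - 1) % ε < ε := Nat.mod_lt _ (by omega)
    have h3 : ((ρ - 1) / ε + 1) * ε = ε * ((ρ - 1) / ε) + ε := by ring
    omega
  have hdivadd : ∀ a b : ℕ, a / ε + b / ε ≤ (a + b) / ε := by
    intro a b
    rw [Nat.le_div_iff_mul_le (by omega : 0 < ε)]
    have h1 := Nat.div_mul_le_self a ε
    have h2 := Nat.div_mul_le_self b ε
    have h3 : (a / ε + b / ε) * ε = a / ε * ε + b / ε * ε := by ring
    omega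
  -- the key fullness lemma
  have hfull : ∀ n ≤ R * α, n ∈ sumset 𝒜 R := by
    intro n hn
    have hα0 : 0 < α := by omega
    set u := n / α with hu
    set v := n % α with hv
    have hdm : α * u + v = n := Nat.div_add_mod n α
    have hvα : v < α := Nat.mod_lt _ hα0
    have hcm : α * u = u * α := mul_comm _ _
    by_cases hv0 : v = 0
    · have huR : u ≤ R := by
        by_contra h
        push_neg at h
        have h1 : α * (R + 1) ≤ α * u := Nat.mul_le_mul_left α (by omega)
        have h2 : α * R = R * α := mul_comm _ _
        have h3 : α * (R + 1) = α * R + α := by ring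
        omega
      exact sumset_subset h0A huR (by rw [show n = u * α by omega]; exact mul_mem_sumset hαA u)
    · have huR : u < R := by
        by_contra h
        push_neg at h
        have h1 : α * R ≤ α * u := Nat.mul_le_mul_left α h
        have h2 : α * R = R * α := mul_comm _ _
        omega
      by_cases hvA : v ∈ 𝒜
      · have h1 := add_mem_sumset (mul_mem_sumset hαA u) (mem_sumset_one hvA)
        have h2 : u * α + v = n := by omega
        rw [h2] at h1
        exact sumset_subset h0A (by omega) h1
      · obtain ⟨a', a, ha'A, haA, ha'v, hva, haα, hgap⟩ := hnbr v (by omega) hvα hvA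
        set ρ' := v - a' with hρ'
        set ρ := a - v with hρ
        have hρ'1 : 1 ≤ ρ' := by omega
        have hρ1 : 1 ≤ ρ := by omega
        obtain ⟨k', hk'def⟩ : ∃ k', k' = (ρ' - 1) / ε + 1 := ⟨_, rfl⟩
        obtain ⟨k, hkdef⟩ : ∃ k, k = (ρ - 1) / ε + 1 := ⟨_, rfl⟩
        have hk' : ρ' ≤ k' * ε := by rw [hk'def]; exact hceil ρ' hρ'1
        have hk : ρ ≤ k * ε := by rw [hkdef]; exact hceil ρ hρ1
        have hkk' : k' + k ≤ R := by
          have h1 := hdivadd (ρ' - 1) (ρ - 1)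
          have h2 : ((ρ' - 1) + (ρ - 1)) / ε ≤ (lam - 1) / ε :=
            Nat.div_le_div_right (by omega)
          omega
        have hdich : k' + u + 1 ≤ R ∨ k ≤ u := by
          clear hk'def hkdef hRdef
          by_contra h
          push_neg at h
          omega
        rcases hdich with h | h
        · -- bottom representation
          have m1 := add_mem_sumset (add_mem_sumset (mul_mem_sumset hαA u)
            (mem_sumset_one ha'A)) (fill_low hIic k' ρ' hk')
          have he : u * α + a' + ρ' = n := by omega
          rw [he] at m1
          exact sumset_subset h0A (by omega) m1
        · -- top representation
          have m2 : k * α - ρ ∈ sumset 𝒜 k := fill_high htail' hεα k ρ hk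
          have m1 := add_mem_sumset (add_mem_sumset (mul_mem_sumset hαA (u - k)) m2)
            (mem_sumset_one haA)
          have hkk : k * ε ≤ k * α := Nat.mul_le_mul_left k hεα
          have hsplit : (u - k) * α + k * α = u * α := by
            rw [← Nat.add_mul]; congr 1; omega
          have he : (u - k) * α + (k * α - ρ) + a = n := by omega
          rw [he] at m1
          exact sumset_subset h0A (by omega) m1
  have hfullR : sumset 𝒜 R = Finset.Iic (R * α) := by
    ext x
    simp only [Finset.mem_Iic]
    exact ⟨fun h => sumset_le hmax h, fun h => hfull x h⟩
  -- small elements bound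
  have hmεp : ∀ m, m ≤ R - 1 → m * ε + 1 < p := by
    intro m hm
    rcases Nat.eq_zero_or_pos m with rfl | hm0
    · clear hRdef; omega
    · have h1 : m - 1 ≤ (lam - 1) / ε := by omega
      have h2 : (m - 1) * ε ≤ (lam - 1) / ε * ε := Nat.mul_le_mul_right ε h1
      have h3 : (lam - 1) / ε * ε ≤ lam - 1 := Nat.div_mul_le_self _ _
      have h4 : m * ε = (m - 1) * ε + 1 * ε := by rw [← Nat.add_mul]; congr 1; omega
      clear hRdef
      omega
  -- not full below R
  have hnotfull : ∀ m, 1 ≤ m → m < R → ¬ IsFull (sumset 𝒜 m) := by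
    rintro m hm1 hmR ⟨n, hn⟩
    have hmα : m * α ∈ sumset 𝒜 m := mul_mem_sumset hαA m
    have h1 : m * α ≤ n := by
      rw [hn] at hmα
      exact Finset.mem_Iic.mp hmα
    have hx : m * ε + 1 ∈ sumset 𝒜 m := by
      rw [hn]
      simp only [Finset.mem_Iic]
      have h5 : m * (ε + 1) ≤ m * α := Nat.mul_le_mul_left m (by omega)
      have h6 : m * (ε + 1) = m * ε + m := by ring
      omega
    have hlt := hmεp m (by omega)
    have := bound_low hsmall m _ hx hlt
    omega
  -- full at and above R
  have hfull_ge : ∀ m, R ≤ m → sumset 𝒜 m = Finset.Iic (m * α) := by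
    intro m hm
    induction m, hm using Nat.le_induction with
    | base => exact hfullR
    | succ m hm ih =>
      rw [sumset_succ, ih]
      ext x
      simp only [Finset.mem_Iic, Finset.mem_add]
      constructor
      · rintro ⟨y, hy, a, ha, rfl⟩
        have := hmax a ha
        have h3 : (m + 1) * α = m * α + α := by ring
        omega
      · intro hx
        have h3 : (m + 1) * α = m * α + α := by ring
        have hαm : α ≤ m * α := Nat.le_mul_of_pos_left α (by omega)
        rcases le_or_gt x (m * α) with h | h
        · exact ⟨x, h, 0, h0A, by omega⟩
        · exact ⟨x - α, by omega, α, hαA, by omega⟩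
  -- R is in the rA set
  have hpairIic : ({0, α} : Finset ℕ) + Finset.Iic (R * α) = Finset.Iic ((R + 1) * α) := by
    ext x
    simp only [Finset.mem_add, Finset.mem_Iic, Finset.mem_insert, Finset.mem_singleton]
    have h3 : (R + 1) * α = R * α + α := by ring
    have hαm : α ≤ R * α := Nat.le_mul_of_pos_left α (by omega)
    constructor
    · rintro ⟨b, hb, c, hc, rfl⟩
      rcases hb with rfl | rfl <;> omega
    · intro hx
      rcases le_or_gt x (R * α) with h | h
      · exact ⟨0, Or.inl rfl, x, h, by omega⟩
      · exact ⟨α, Or.inr rfl, x - α, by omega, by omega⟩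
  have hRmem_r : sumset 𝒜 (R + 1) = ({0, α} : Finset ℕ) + sumset 𝒜 R := by
    rw [hfull_ge (R + 1) (by omega), hfullR, hpairIic]
  -- no r < R is in the rA set
  have hnot_r : ∀ r, r < R → sumset 𝒜 (r + 1) ≠ ({0, α} : Finset ℕ) + sumset 𝒜 r := by
    intro r hr heq
    have hiter : ∀ k, sumset 𝒜 (r + k) = sumset ({0, α} : Finset ℕ) k + sumset 𝒜 r := by
      intro k
      induction k with
      | zero =>
        show sumset 𝒜 r = sumset ({0, α} : Finset ℕ) 0 + sumset 𝒜 r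
        have : sumset ({0, α} : Finset ℕ) 0 = (0 : Finset ℕ) := rfl
        rw [this, zero_add]
      | succ k ih =>
        calc sumset 𝒜 (r + (k + 1)) = sumset 𝒜 (r + k) + 𝒜 := rfl
          _ = sumset ({0, α} : Finset ℕ) k + sumset 𝒜 r + 𝒜 := by rw [ih]
          _ = sumset ({0, α} : Finset ℕ) k + (sumset 𝒜 r + 𝒜) := add_assoc _ _ _
          _ = sumset ({0, α} : Finset ℕ) k + (({0, α} : Finset ℕ) + sumset 𝒜 r) := by
              rw [← sumset_succ, heq]
          _ = sumset ({0, α} : Finset ℕ) k + ({0, α} : Finset ℕ) + sumset 𝒜 r := by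
              rw [add_assoc]
          _ = sumset ({0, α} : Finset ℕ) (k + 1) + sumset 𝒜 r := rfl
    have hxp : r * ε + 1 < p := hmεp r (by omega)
    have hx : r * ε + 1 ∈ sumset 𝒜 R := by
      rw [hfullR]
      simp only [Finset.mem_Iic]
      have hαm : α ≤ R * α := Nat.le_mul_of_pos_left α (by omega)
      omega
    rw [show R = r + (R - r) by omega, hiter (R - r), Finset.mem_add] at hx
    obtain ⟨b, hb, c, hc, hbc⟩ := hx
    obtain ⟨j, hj, rfl⟩ := sumset_pair hb
    rcases Nat.eq_zero_or_pos j with rfl | hj0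
    · simp only [Nat.zero_mul, Nat.zero_add] at hbc
      rw [hbc] at hc
      have := bound_low hsmall r _ hc hxp
      omega
    · have : α ≤ j * α := Nat.le_mul_of_pos_left α hj0
      omega
  -- compute regA
  have hreg : regA 𝒜 = R := by
    have hmem : R ∈ {m : ℕ | 1 ≤ m ∧ IsFull (sumset 𝒜 m)} := ⟨by omega, ⟨R * α, hfullR⟩⟩
    have h1 : sInf {m : ℕ | 1 ≤ m ∧ IsFull (sumset 𝒜 m)} ≤ R := Nat.sInf_le hmem
    rcases lt_or_eq_of_le h1 with h | h
    · exfalso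
      have h2 := Nat.sInf_mem (⟨R, hmem⟩ : Set.Nonempty {m : ℕ | 1 ≤ m ∧ IsFull (sumset 𝒜 m)})
      exact hnotfull _ h2.1 h h2.2
    · exact h
  have hr : rA 𝒜 α = R := by
    have hmem : R ∈ {r : ℕ | sumset 𝒜 (r + 1) = ({0, α} : Finset ℕ) + sumset 𝒜 r} := hRmem_r
    have h1 : sInf {r : ℕ | sumset 𝒜 (r + 1) = ({0, α} : Finset ℕ) + sumset 𝒜 r} ≤ R :=
      Nat.sInf_le hmem
    rcases lt_or_eq_of_le h1 with h | h
    · exfalso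
      have h2 := Nat.sInf_mem (⟨R, hmem⟩ :
        Set.Nonempty {r : ℕ | sumset 𝒜 (r + 1) = ({0, α} : Finset ℕ) + sumset 𝒜 r})
      exact hnot_r _ h h2
    · exact h
  refine ⟨hreg.trans hr.symm, ?_⟩
  rw [hr, hRdef]
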